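/- arXiv:math/0205068 — 2 statements merged into one kernel-verified Lean document; each statement's English description precedes it below -/
import Mathlib

section
/- Let f ∈ ℂ[x,y] have only isolated critical points, and let A : V → V be the ℂ-linear operator on V = ℂ[x,y]/⟨f_x, f_y⟩ given by multiplication by f. Then the set of eigenvalues of A equals the set of critical values of f. -/
/- STATEMENT 1: For f ∈ ℂ[x,y] with isolated critical points, the eigenvalues of the
multiplication-by-f operator on V = ℂ[x,y]/⟨f_x,f_y⟩ are exactly the critical values of f. -/

open MvPolynomial

noncomputable section

abbrev P2 : Type := MvPolynomial (Fin 2) ℂ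

def evP (p : ℂ × ℂ) (g : P2) : ℂ := MvPolynomial.eval ![p.1, p.2] g

def CritSet (f : P2) : Set (ℂ × ℂ) :=
  {p | evP p (pderiv 0 f) = 0 ∧ evP p (pderiv 1 f) = 0}

def Jac (f : P2) : Ideal P2 := Ideal.span {pderiv 0 f, pderiv 1 f}

/-- Multiplication by (the class of) `f` as a ℂ-linear endomorphism of `V = ℂ[x,y]/⟨f_x,f_y⟩`. -/
def multf (f : P2) : Module.End ℂ (P2 ⧸ Jac f) :=
  Algebra.lmul ℂ (P2 ⧸ Jac f) (Ideal.Quotient.mk (Jac f) f)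

/- auxiliary lemmas -/

lemma vec_pair_eq (x : Fin 2 → ℂ) : ![x 0, x 1] = x := by
  funext i; fin_cases i <;> rfl

lemma evP_eq_eval (x : Fin 2 → ℂ) (g : P2) : evP (x 0, x 1) g = MvPolynomial.eval x g := by
  simp [evP, vec_pair_eq]

lemma pderiv0_mem_Jac (f : P2) : pderiv 0 f ∈ Jac f :=
  Ideal.subset_span (by simp)

lemma pderiv1_mem_Jac (f : P2) : pderiv 1 f ∈ Jac f :=
  Ideal.subset_span (by simp)

lemma evP_eq_zero_of_mem_Jac {f : P2} {p : ℂ × ℂ} (hp : p ∈ CritSet f) {h : P2}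
    (hh : h ∈ Jac f) : evP p h = 0 := by
  rw [Jac, Ideal.mem_span_pair] at hh
  obtain ⟨u, v, rfl⟩ := hh
  simp only [evP, map_add, map_mul]
  rw [show MvPolynomial.eval ![p.1, p.2] (pderiv 0 f) = 0 from hp.1,
    show MvPolynomial.eval ![p.1, p.2] (pderiv 1 f) = 0 from hp.2]
  ring

/-- separating polynomial: value 1 at `p`, value 0 at `q` (for `q ≠ p`). -/
def sep (p q : ℂ × ℂ) : P2 :=
  if q.1 ≠ p.1 then C (p.1 - q.1)⁻¹ * (X 0 - C q.1) else C (p.2 - q.2)⁻¹ * (X 1 - C q.2)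

lemma evP_sep_self (p q : ℂ × ℂ) (hne : q ≠ p) : evP p (sep p q) = 1 := by
  rw [sep]
  by_cases h : q.1 ≠ p.1
  · rw [if_pos h]
    simp [evP]
    exact inv_mul_cancel₀ (sub_ne_zero.mpr (Ne.symm h))
  · rw [if_neg h]
    push_neg at h
    have h2 : q.2 ≠ p.2 := by
      intro h2; exact hne (Prod.ext h h2)
    simp [evP]
    exact inv_mul_cancel₀ (sub_ne_zero.mpr (Ne.symm h2))

lemma evP_sep_zero (p q : ℂ × ℂ) : evP q (sep p q) = 0 := by
  rw [sep]
  by_cases h : q.1 ≠ p.1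
  · rw [if_pos h]; simp [evP]
  · rw [if_neg h]; simp [evP]

theorem eigenvalues_eq_critical_values (f : P2) (hfin : (CritSet f).Finite) (c : ℂ) :
    (multf f).HasEigenvalue c ↔ ∃ p ∈ CritSet f, evP p f = c := by
  classical
  constructor
  · -- eigenvalue ⟹ critical value
    intro hev
    by_contra hcon
    push_neg at hcon
    obtain ⟨w, hw⟩ := hev.exists_hasEigenvector
    obtain ⟨v, rfl⟩ := Ideal.Quotient.mk_surjective w
    have hv0 : v ∉ Jac f := by
      intro hv
      exact hw.2 ((Ideal.Quotient.eq_zero_iff_mem).mpr hv)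
    -- the eigenvector equation means (f - C c) * v ∈ Jac f
    have heq : (f - C c) * v ∈ Jac f := by
      have h1 : multf f (Ideal.Quotient.mk (Jac f) v) = c • Ideal.Quotient.mk (Jac f) v :=
        Module.End.mem_eigenspace_iff.mp hw.1
      have h2 : Ideal.Quotient.mk (Jac f) (f * v) = Ideal.Quotient.mk (Jac f) (C c * v) := by
        rw [← smul_eq_C_mul]
        rw [← Ideal.Quotient.mkₐ_eq_mk ℂ (Jac f)] at h1 ⊢
        rw [map_mul, map_smul]
        exact h1
      have h3 := (Ideal.Quotient.eq).mp h2
      have : f * v - C c * v = (f - C c) * v := by ring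
      rwa [this] at h3
    -- the ideal Jac f + (f - C c) has empty zero locus
    set I : Ideal P2 := Jac f ⊔ Ideal.span {f - C c} with hI
    have hone : (1 : P2) ∈ I.radical := by
      rw [← MvPolynomial.vanishingIdeal_zeroLocus_eq_radical (K := ℂ)]
      intro x hx
      exfalso
      have hcx : (x 0, x 1) ∈ CritSet f := by
        constructor
        · rw [evP_eq_eval]
          exact hx _ (le_sup_left (α := Ideal P2) (pderiv0_mem_Jac f))
        · rw [evP_eq_eval]
          exact hx _ (le_sup_left (α := Ideal P2) (pderiv1_mem_Jac f))
      have hfx : evP (x 0, x 1) f = c := by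
        have := hx (f - C c) (le_sup_right (α := Ideal P2)
          (Ideal.subset_span (Set.mem_singleton _)))
        rw [map_sub] at this
        rw [evP_eq_eval]
        have hc : MvPolynomial.eval x (C c) = c := by simp
        change MvPolynomial.eval x f - MvPolynomial.eval x (C c) = 0 at this
        rw [hc] at this
        exact sub_eq_zero.mp this
      exact hcon _ hcx hfx
    obtain ⟨n, hn⟩ := hone
    rw [one_pow] at hn
    rw [hI, Submodule.mem_sup] at hn
    obtain ⟨y, hy, z, hz, hyz⟩ := hn
    obtain ⟨a, rfl⟩ := Ideal.mem_span_singleton'.mp hz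
    -- v = v * 1 = v * y + v * (a * (f - C c)) ∈ Jac f
    apply hv0
    have hv1 : v = v * y + a * ((f - C c) * v) := by
      calc v = v * 1 := (mul_one v).symm
        _ = v * (y + a * (f - C c)) := by rw [hyz]
        _ = v * y + a * ((f - C c) * v) := by ring
    rw [hv1]
    exact Ideal.add_mem _ (Ideal.mul_mem_left _ v hy) (Ideal.mul_mem_left _ a heq)
  · -- critical value ⟹ eigenvalue
    intro h
    obtain ⟨p, hp, hpc⟩ := h
    -- interpolation polynomial
    have hSfin : (CritSet f \ {p}).Finite := hfin.subset Set.diff_subset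
    set g : P2 := ∏ q ∈ hSfin.toFinset, sep p q with hg
    have hgp : evP p g = 1 := by
      rw [hg]
      rw [evP, map_prod]
      apply Finset.prod_eq_one
      intro q hq
      rw [Set.Finite.mem_toFinset] at hq
      exact evP_sep_self p q (fun h => hq.2 h)
    have hgq : ∀ q ∈ CritSet f, q ≠ p → evP q g = 0 := by
      intro q hq hqp
      rw [hg, evP, map_prod]
      apply Finset.prod_eq_zero (Set.Finite.mem_toFinset hSfin |>.mpr ⟨hq, hqp⟩)
      exact evP_sep_zero p q
    -- (f - C c) * g is in the radical of Jac f
    have hrad : (f - C c) * g ∈ (Jac f).radical := by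
      rw [← MvPolynomial.vanishingIdeal_zeroLocus_eq_radical (K := ℂ)]
      intro x hx
      have hcx : (x 0, x 1) ∈ CritSet f := by
        constructor
        · rw [evP_eq_eval]; exact hx _ (pderiv0_mem_Jac f)
        · rw [evP_eq_eval]; exact hx _ (pderiv1_mem_Jac f)
      rw [map_mul]
      by_cases hxp : (x 0, x 1) = p
      · have : MvPolynomial.eval x (f - C c) = 0 := by
          rw [map_sub, show MvPolynomial.eval x (C c) = c by simp]
          rw [← evP_eq_eval, hxp, hpc, sub_self]
        change MvPolynomial.eval x (f - C c) * MvPolynomial.eval x g = 0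
        rw [this, zero_mul]
      · have : MvPolynomial.eval x g = 0 := by
          rw [← evP_eq_eval]; exact hgq _ hcx hxp
        change MvPolynomial.eval x (f - C c) * MvPolynomial.eval x g = 0
        rw [this, mul_zero]
    obtain ⟨N, hN⟩ := hrad
    rw [mul_pow] at hN
    -- take minimal k with (f - C c)^k * g^N ∈ Jac f
    have hT : ∃ k, (f - C c) ^ k * g ^ N ∈ Jac f := ⟨N, hN⟩
    set k := Nat.find hT with hk
    have hkmem : (f - C c) ^ k * g ^ N ∈ Jac f := Nat.find_spec hT
    have hk0 : k ≠ 0 := by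
      intro h0
      have := hkmem
      rw [h0, pow_zero, one_mul] at this
      have := evP_eq_zero_of_mem_Jac hp this
      rw [evP, map_pow, ← evP, hgp, one_pow] at this
      exact one_ne_zero this
    set v : P2 := (f - C c) ^ (k - 1) * g ^ N with hv
    have hvnot : v ∉ Jac f := Nat.find_min hT (Nat.sub_lt (Nat.pos_of_ne_zero hk0) one_pos)
    have hvmul : (f - C c) * v ∈ Jac f := by
      have : (f - C c) * v = (f - C c) ^ k * g ^ N := by
        rw [hv, ← mul_assoc, ← pow_succ']
        rw [Nat.sub_add_cancel (Nat.one_le_iff_ne_zero.mpr hk0)]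
      rwa [this]
    -- mk v is an eigenvector
    apply Module.End.hasEigenvalue_of_hasEigenvector
      (x := Ideal.Quotient.mk (Jac f) v)
    constructor
    · rw [Module.End.mem_eigenspace_iff]
      have h2 : Ideal.Quotient.mk (Jac f) (f * v) = Ideal.Quotient.mk (Jac f) (C c * v) := by
        rw [Ideal.Quotient.eq]
        have : f * v - C c * v = (f - C c) * v := by ring
        rwa [this]
      calc multf f (Ideal.Quotient.mk (Jac f) v)
          = Ideal.Quotient.mk (Jac f) (f * v) := by
            rw [multf, Algebra.lmul]
            simp [← map_mul]
        _ = Ideal.Quotient.mk (Jac f) (C c * v) := h2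
        _ = c • Ideal.Quotient.mk (Jac f) v := by
            rw [← smul_eq_C_mul, ← Ideal.Quotient.mkₐ_eq_mk ℂ (Jac f), map_smul]
    · intro h0
      exact hvnot ((Ideal.Quotient.eq_zero_iff_mem).mp h0)

end
end

section
/- Let l_0, …, l_d be affine-linear polynomials over ℂ defining d+1 lines in general position (no two parallel, no three concurrent), and let B_1, …, B_{d(d+1)/2} be their pairwise intersection points. Then the evaluation map ℂ[x,y]_{≤ d+1} → ℂ^{d(d+1)/2}, P ↦ (P(B_m))_m, is surjective. -/
/- STATEMENT 10: for d+1 lines in general position in ℂ² the evaluation map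
ℂ[x,y]_{≤d+1} → ℂ^{intersection points}, P ↦ (P(B_m))_m, is surjective. -/

open MvPolynomial Finset

noncomputable section

theorem evaluation_at_intersection_points_surjective (d : ℕ) (a b c : Fin (d + 1) → ℂ)
    (l : Fin (d + 1) → P2)
    (hl : ∀ i, l i = C (a i) * X 0 + C (b i) * X 1 + C (c i))
    (hpar : ∀ i j, i ≠ j → a i * b j ≠ a j * b i)
    (hconc : ∀ i j k, i ≠ j → j ≠ k → i ≠ k →
      ¬ ∃ p : ℂ × ℂ, evP p (l i) = 0 ∧ evP p (l j) = 0 ∧ evP p (l k) = 0) :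
    ∀ g : ℂ × ℂ → ℂ, ∃ P : P2, P.totalDegree ≤ d + 1 ∧
      ∀ p : ℂ × ℂ, (∃ i j, i ≠ j ∧ evP p (l i) = 0 ∧ evP p (l j) = 0) → evP p P = g p := by
  intro g
  have hev : ∀ (p : ℂ × ℂ) (i : Fin (d+1)), evP p (l i) = a i * p.1 + b i * p.2 + c i := by
    intro p i; simp [evP, hl]
  have hD : ∀ i j : Fin (d+1), i ≠ j → a i * b j - a j * b i ≠ 0 :=
    fun i j h => sub_ne_zero.2 (hpar i j h)
  set pt : Fin (d+1) → Fin (d+1) → ℂ × ℂ := fun i j =>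
    ((b i * c j - b j * c i) / (a i * b j - a j * b i),
     (c i * a j - c j * a i) / (a i * b j - a j * b i)) with hpt
  have hon : ∀ i j : Fin (d+1), i ≠ j → evP (pt i j) (l i) = 0 ∧ evP (pt i j) (l j) = 0 := by
    intro i j hij
    have hD' := hD i j hij
    constructor <;> rw [hev] <;> simp only [hpt] <;> rw [mul_div_assoc', mul_div_assoc', ← add_div, div_add' _ _ _ hD', div_eq_zero_iff] <;> left <;> ring
  have huniq : ∀ (p : ℂ × ℂ) (i j : Fin (d+1)), i ≠ j →
      evP p (l i) = 0 → evP p (l j) = 0 → p = pt i j := by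
    intro p i j hij h1 h2
    rw [hev] at h1 h2
    have hD' := hD i j hij
    have hx : p.1 = (b i * c j - b j * c i) / (a i * b j - a j * b i) := by
      rw [eq_div_iff hD']; linear_combination b j * h1 - b i * h2
    have hy : p.2 = (c i * a j - c j * a i) / (a i * b j - a j * b i) := by
      rw [eq_div_iff hD']; linear_combination a i * h2 - a j * h1
    exact Prod.ext hx hy
  set Q : Fin (d+1) → Fin (d+1) → P2 := fun i j => ∏ k ∈ univ \ {i, j}, l k with hQ
  have hldeg : ∀ k, (l k).totalDegree ≤ 1 := by
    intro k; rw [hl]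
    refine le_trans (totalDegree_add _ _) (max_le (le_trans (totalDegree_add _ _)
      (max_le ?_ ?_)) (by simp)) <;>
    · refine le_trans (totalDegree_mul _ _) ?_
      simp [totalDegree_X]
  have hQdeg : ∀ i j, (Q i j).totalDegree ≤ d + 1 := by
    intro i j
    refine le_trans (totalDegree_finset_prod _ _) ?_
    calc ∑ k ∈ univ \ {i, j}, (l k).totalDegree
        ≤ ∑ _k ∈ univ \ {i, j}, 1 := Finset.sum_le_sum (fun k _ => hldeg k)
      _ = (univ \ {i, j}).card := by simp
      _ ≤ (univ : Finset (Fin (d+1))).card := Finset.card_le_card (Finset.sdiff_subset)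
      _ = d + 1 := by simp
  have hQne : ∀ i j : Fin (d+1), i ≠ j → evP (pt i j) (Q i j) ≠ 0 := by
    intro i j hij h0
    have : evP (pt i j) (Q i j) = ∏ k ∈ univ \ {i, j}, evP (pt i j) (l k) := by
      simp [evP, hQ, map_prod]
    rw [this] at h0
    obtain ⟨k, hk, hk0⟩ := Finset.prod_eq_zero_iff.1 h0
    simp only [Finset.mem_sdiff, Finset.mem_insert, Finset.mem_singleton, not_or] at hk
    exact hconc i j k hij (Ne.symm hk.2.2) (Ne.symm hk.2.1)
      ⟨pt i j, (hon i j hij).1, (hon i j hij).2, hk0⟩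
  have hQzero : ∀ (p : ℂ × ℂ) (k i' j' : Fin (d+1)), k ≠ i' → k ≠ j' →
      evP p (l k) = 0 → evP p (Q i' j') = 0 := by
    intro p k i' j' h1 h2 h0
    have : evP p (Q i' j') = ∏ m ∈ univ \ {i', j'}, evP p (l m) := by
      simp [evP, hQ, map_prod]
    rw [this]
    exact Finset.prod_eq_zero (by simp [h1, h2]) h0
  set s : Finset (Fin (d+1) × Fin (d+1)) :=
    Finset.univ.filter (fun ij => ij.1 < ij.2) with hs
  refine ⟨∑ ij ∈ s, C (g (pt ij.1 ij.2) / evP (pt ij.1 ij.2) (Q ij.1 ij.2)) * Q ij.1 ij.2,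
    ?_, ?_⟩
  · refine le_trans (totalDegree_finset_sum _ _) (Finset.sup_le fun ij _ => ?_)
    exact le_trans (totalDegree_mul _ _) (by simpa using hQdeg ij.1 ij.2)
  · have hevsum : ∀ p : ℂ × ℂ,
        evP p (∑ ij ∈ s, C (g (pt ij.1 ij.2) / evP (pt ij.1 ij.2) (Q ij.1 ij.2)) * Q ij.1 ij.2)
        = ∑ ij ∈ s, g (pt ij.1 ij.2) / evP (pt ij.1 ij.2) (Q ij.1 ij.2) * evP p (Q ij.1 ij.2) := by
      intro p; simp [evP, map_sum]
    have key : ∀ (p : ℂ × ℂ) (i j : Fin (d+1)), i < j →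
        evP p (l i) = 0 → evP p (l j) = 0 →
        evP p (∑ ij ∈ s, C (g (pt ij.1 ij.2) / evP (pt ij.1 ij.2) (Q ij.1 ij.2)) * Q ij.1 ij.2)
          = g p := by
      intro p i j hij h1 h2
      have hij' : i ≠ j := ne_of_lt hij
      have hp : p = pt i j := huniq p i j hij' h1 h2
      rw [hevsum]
      rw [Finset.sum_eq_single (i, j)]
      · rw [← hp, div_mul_cancel₀]
        rw [hp]; exact hQne i j hij'
      · rintro ⟨i', j'⟩ hmem hne
        simp only [hs, Finset.mem_filter] at hmem
        have hij'lt : i' < j' := hmem.2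
        have : i ≠ i' ∧ i ≠ j' ∨ j ≠ i' ∧ j ≠ j' := by
          by_contra h
          push_neg at h
          obtain ⟨h3, h4⟩ := h
          have e1 : i = i' ∨ i = j' := or_iff_not_imp_left.2 h3
          have e2 : j = i' ∨ j = j' := or_iff_not_imp_left.2 h4
          have hv1 : (i : ℕ) = i' ∨ (i : ℕ) = j' := by rcases e1 with h | h <;> simp [h]
          have hv2 : (j : ℕ) = i' ∨ (j : ℕ) = j' := by rcases e2 with h | h <;> simp [h]
          have hlt1 : (i : ℕ) < j := hij
          have hlt2 : (i' : ℕ) < j' := hij'lt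
          have : (i' : ℕ) = i ∧ (j' : ℕ) = j := by omega
          exact hne (Prod.ext (Fin.ext this.1) (Fin.ext this.2))
        rcases this with ⟨hA, hB⟩ | ⟨hA, hB⟩
        · rw [hQzero p i i' j' hA hB h1, mul_zero]
        · rw [hQzero p j i' j' hA hB h2, mul_zero]
      · intro hnot
        exact absurd (by simp [hs, hij] : (i, j) ∈ s) hnot
    rintro p ⟨i, j, hij, h1, h2⟩
    rcases lt_or_gt_of_ne hij with h | h
    · exact key p i j h h1 h2
    · exact key p j i h h2 h1

end
end
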